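/- Fix integers k ≥ q ≥ 1 and, for each nonempty subset I of the color set [k] with |I| ≤ q, a positive integer p_I. Let G((p_I)_I) denote the smallest positive integer n such that every Gallai-k-coloring of K_n contains, for some such subset I, a set of p_I vertices all of whose induced edges have colors belonging to I. Then G((p_I)_I) ≤ 4 · max_{1≤i≤k} G((p_I^{(i)})_I), where p_I^{(i)} = p_I − 1 if i ∈ I and p_I^{(i)} = p_I otherwise. -/

import Mathlib

open Finset

/-- A Gallai coloring: a symmetric edge-coloring of the complete graph on `V`
with no rainbow triangle. -/
def IsGallai {V β : Type*} (c : V → V → β) : Prop :=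
  (∀ a b, c a b = c b a) ∧
  ∀ a b d : V, a ≠ b → a ≠ d → b ≠ d →
    ¬(c a b ≠ c a d ∧ c a b ≠ c b d ∧ c a d ≠ c b d)

/-- The set of colors appearing on edges inside the vertex set `S`. -/
def colorsOn {V β : Type*} [DecidableEq V] [DecidableEq β]
    (c : V → V → β) (S : Finset V) : Finset β :=
  ((S ×ˢ S).filter fun p => p.1 ≠ p.2).image fun p => c p.1 p.2

/-- `gallaiNum k q p` is the smallest positive `n` such that every Gallai-`k`-coloring
of `K_n` contains a set of `p` vertices whose induced edges use at most `q` colors. -/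
noncomputable def gallaiNum (k q p : ℕ) : ℕ :=
  sInf {n : ℕ | 0 < n ∧ ∀ c : Fin n → Fin n → Fin k, IsGallai c →
    ∃ S : Finset (Fin n), S.card = p ∧ (colorsOn c S).card ≤ q}

/-- The smallest positive `n` such that every Gallai-`k`-coloring of `K_n` contains,
for some nonempty set `I` of at most `q` colors, a set of `P I` vertices all of whose
induced edges have colors in `I`. -/
noncomputable def multiGallaiNum (k q : ℕ) (P : Finset (Fin k) → ℕ) : ℕ :=
  sInf {n : ℕ | 0 < n ∧ ∀ c : Fin n → Fin n → Fin k, IsGallai c →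
    ∃ I : Finset (Fin k), I.Nonempty ∧ I.card ≤ q ∧
      ∃ S : Finset (Fin n), S.card = P I ∧ ∀ a ∈ S, ∀ b ∈ S, a ≠ b → c a b ∈ I}

section
variable {V β : Type*} [DecidableEq V] [DecidableEq β]

def GoodPart (c : V → V → β) (S : Finset V) (Pp : Finset (Finset V)) (r y : β) : Prop :=
  (∀ p ∈ Pp, p.Nonempty) ∧ (∀ p ∈ Pp, p ⊆ S) ∧
  (∀ p ∈ Pp, ∀ q ∈ Pp, p ≠ q → Disjoint p q) ∧
  (∀ v ∈ S, ∃ p ∈ Pp, v ∈ p) ∧ 2 ≤ Pp.card ∧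
  (∀ p ∈ Pp, ∀ q ∈ Pp, p ≠ q → ∀ u ∈ p, ∀ w ∈ q, c u w = r ∨ c u w = y)

lemma lemB (c : V → V → β) (hsym : ∀ a b, c a b = c b a)
    (tri : ∀ a b d : V, a ≠ b → a ≠ d → b ≠ d →
      c a b = c a d ∨ c a b = c b d ∨ c a d = c b d) :
    ∀ (n : ℕ) (S : Finset V), S.card = n → 2 ≤ n →
    ∃ (Pp : Finset (Finset V)) (r y : β), GoodPart c S Pp r y := by
  intro n
  induction n using Nat.strong_induction_on with
  | _ n IH =>
    intro S hcard hn
    classical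
    by_cases h2 : n = 2
    · -- base case
      obtain ⟨a, b0, hab, rfl⟩ := Finset.card_eq_two.mp (by omega : S.card = 2)
      refine ⟨{{a}, {b0}}, c a b0, c a b0, ?_, ?_, ?_, ?_, ?_, ?_⟩
      · intro p hp
        rcases Finset.mem_insert.mp hp with rfl | hp
        · exact singleton_nonempty a
        · rw [Finset.mem_singleton.mp hp]; exact singleton_nonempty b0
      · intro p hp
        rcases Finset.mem_insert.mp hp with rfl | hp
        · intro z hz; rw [Finset.mem_singleton.mp hz]; exact mem_insert_self _ _
        · rw [Finset.mem_singleton.mp hp]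
          intro z hz; rw [Finset.mem_singleton.mp hz]
          exact mem_insert_of_mem (mem_singleton_self _)
      · intro p hp q hq hpq
        rcases Finset.mem_insert.mp hp with rfl | hp <;>
          rcases Finset.mem_insert.mp hq with rfl | hq
        · exact (hpq rfl).elim
        · rw [Finset.mem_singleton.mp hq]
          exact Finset.disjoint_singleton.mpr hab
        · rw [Finset.mem_singleton.mp hp]
          exact (Finset.disjoint_singleton.mpr hab).symm
        · simp [Finset.mem_singleton.mp hp, Finset.mem_singleton.mp hq] at hpq
      · intro v hv
        rcases Finset.mem_insert.mp hv with rfl | hv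
        · exact ⟨{v}, mem_insert_self _ _, mem_singleton_self _⟩
        · rw [Finset.mem_singleton.mp hv]
          exact ⟨{b0}, mem_insert_of_mem (mem_singleton_self _), mem_singleton_self _⟩
      · rw [Finset.card_insert_of_notMem, Finset.card_singleton]
        simp only [Finset.mem_singleton]
        intro h; exact hab (Finset.singleton_injective h)
      · intro p hp q hq hpq u hu w hw
        rcases Finset.mem_insert.mp hp with rfl | hp <;>
          rcases Finset.mem_insert.mp hq with rfl | hq
        · exact (hpq rfl).elim
        · rw [Finset.mem_singleton.mp hq] at hw
          rw [Finset.mem_singleton.mp hu, Finset.mem_singleton.mp hw]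
          exact Or.inl rfl
        · rw [Finset.mem_singleton.mp hp] at hu
          rw [Finset.mem_singleton.mp hu, Finset.mem_singleton.mp hw]
          exact Or.inl (hsym b0 a)
        · simp [Finset.mem_singleton.mp hp, Finset.mem_singleton.mp hq] at hpq
    · -- inductive step
      have hn3 : 3 ≤ n := by omega
      have hSne : S.Nonempty := by
        rw [← Finset.card_pos, hcard]; omega
      obtain ⟨x, hx⟩ := hSne
      set W := S.erase x with hWdef
      have hWcard : W.card = n - 1 := by
        rw [hWdef, Finset.card_erase_of_mem hx, hcard]
      obtain ⟨Pp, r, y, hne, hsub, hdis, hcov, hPc, hcross⟩ :=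
        IH (n-1) (by omega) W hWcard (by omega)
      have hxW : x ∉ W := Finset.notMem_erase x S
      have hWS : W ⊆ S := Finset.erase_subset x S
      have memW : ∀ w ∈ W, w ∈ S ∧ w ≠ x := by
        intro w hw
        exact ⟨hWS hw, (Finset.mem_erase.mp hw).1⟩
      -- unique parts
      have partU : ∀ u (p q : Finset V), p ∈ Pp → q ∈ Pp → u ∈ p → u ∈ q → p = q := by
        intro u p q hp hq hup huq
        by_contra hne'
        exact absurd huq (Finset.disjoint_left.mp (hdis p hp q hq hne') hup)
      -- cross colors for different parts
      have crossD : ∀ u ∈ W, ∀ w ∈ W, (∀ p ∈ Pp, u ∈ p → w ∉ p) →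
          c u w = r ∨ c u w = y := by
        intro u hu w hw hdiff
        obtain ⟨p, hp, hup⟩ := hcov u hu
        obtain ⟨q, hq, hwq⟩ := hcov w hw
        have hpq : p ≠ q := by
          rintro rfl; exact hdiff p hp hup hwq
        exact hcross p hp q hq hpq u hup w hwq
      by_cases hall : ∀ w ∈ W, c x w = r ∨ c x w = y
      · -- Case 1: add {x} as a new part
        refine ⟨insert {x} Pp, r, y, ?_, ?_, ?_, ?_, ?_, ?_⟩
        · intro p hp
          rcases Finset.mem_insert.mp hp with rfl | hp
          · exact singleton_nonempty x
          · exact hne p hp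
        · intro p hp
          rcases Finset.mem_insert.mp hp with rfl | hp
          · exact Finset.singleton_subset_iff.mpr hx
          · exact (hsub p hp).trans hWS
        · intro p hp q hq hpq
          rcases Finset.mem_insert.mp hp with rfl | hp <;>
            rcases Finset.mem_insert.mp hq with rfl | hq
          · exact (hpq rfl).elim
          · exact Finset.disjoint_singleton_left.mpr (fun hxq => hxW (hsub q hq hxq))
          · exact Finset.disjoint_singleton_right.mpr (fun hxp => hxW (hsub p hp hxp))
          · exact hdis p hp q hq hpq
        · intro v hv
          by_cases hvx : v = x
          · exact ⟨{x}, mem_insert_self _ _, by simp [hvx]⟩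
          · obtain ⟨p, hp, hvp⟩ := hcov v (Finset.mem_erase.mpr ⟨hvx, hv⟩)
            exact ⟨p, mem_insert_of_mem hp, hvp⟩
        · exact le_trans hPc (Finset.card_le_card (Finset.subset_insert _ _))
        · intro p hp q hq hpq u hu w hw
          rcases Finset.mem_insert.mp hp with rfl | hp <;>
            rcases Finset.mem_insert.mp hq with rfl | hq
          · exact (hpq rfl).elim
          · rw [Finset.mem_singleton.mp hu]
            exact hall w (hsub q hq hw)
          · rw [Finset.mem_singleton.mp hw, hsym]
            exact hall u (hsub p hp hu)
          · exact hcross p hp q hq hpq u hu w hw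
      · push_neg at hall
        obtain ⟨w0, hw0W, hw0r, hw0y⟩ := hall
        by_cases habs : ∃ j ∈ Pp, ∀ w ∈ W, w ∉ j → c x w = r ∨ c x w = y
        · -- Case 2a: absorb x into the part j
          obtain ⟨j, hj, hjall⟩ := habs
          have hinsnot : insert x j ∉ Pp.erase j := by
            intro hmem
            exact hxW (hsub _ (Finset.mem_of_mem_erase hmem) (mem_insert_self x j))
          refine ⟨insert (insert x j) (Pp.erase j), r, y, ?_, ?_, ?_, ?_, ?_, ?_⟩
          · intro p hp
            rcases Finset.mem_insert.mp hp with rfl | hp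
            · exact insert_nonempty x j
            · exact hne p (Finset.mem_of_mem_erase hp)
          · intro p hp
            rcases Finset.mem_insert.mp hp with rfl | hp
            · exact Finset.insert_subset hx ((hsub j hj).trans hWS)
            · exact (hsub p (Finset.mem_of_mem_erase hp)).trans hWS
          · intro p hp q hq hpq
            rcases Finset.mem_insert.mp hp with rfl | hp <;>
              rcases Finset.mem_insert.mp hq with rfl | hq
            · exact (hpq rfl).elim
            · rw [Finset.disjoint_insert_left]
              refine ⟨fun hxq => hxW (hsub q (Finset.mem_of_mem_erase hq) hxq), ?_⟩
              exact hdis j hj q (Finset.mem_of_mem_erase hq)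
                (fun h => (Finset.mem_erase.mp hq).1 h.symm)
            · rw [Finset.disjoint_insert_right]
              refine ⟨fun hxp => hxW (hsub p (Finset.mem_of_mem_erase hp) hxp), ?_⟩
              exact hdis p (Finset.mem_of_mem_erase hp) j hj (Finset.mem_erase.mp hp).1
            · exact hdis p (Finset.mem_of_mem_erase hp) q (Finset.mem_of_mem_erase hq) hpq
          · intro v hv
            by_cases hvx : v = x
            · exact ⟨insert x j, mem_insert_self _ _, by simp [hvx]⟩
            · obtain ⟨p, hp, hvp⟩ := hcov v (Finset.mem_erase.mpr ⟨hvx, hv⟩)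
              by_cases hpj : p = j
              · exact ⟨insert x j, mem_insert_self _ _,
                  mem_insert_of_mem (hpj ▸ hvp)⟩
              · exact ⟨p, mem_insert_of_mem (Finset.mem_erase.mpr ⟨hpj, hp⟩), hvp⟩
          · rw [Finset.card_insert_of_notMem hinsnot, Finset.card_erase_of_mem hj]
            omega
          · intro p hp q hq hpq u hu w hw
            rcases Finset.mem_insert.mp hp with rfl | hp <;>
              rcases Finset.mem_insert.mp hq with rfl | hq
            · exact (hpq rfl).elim
            · have hqW : q ⊆ W := hsub q (Finset.mem_of_mem_erase hq)
              have hwnj : w ∉ j := by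
                intro hwj
                exact absurd hwj (Finset.disjoint_right.mp
                  (hdis j hj q (Finset.mem_of_mem_erase hq)
                    (fun h => (Finset.mem_erase.mp hq).1 h.symm)) hw)
              rcases Finset.mem_insert.mp hu with rfl | huj
              · exact hjall w (hqW hw) hwnj
              · exact hcross j hj q (Finset.mem_of_mem_erase hq)
                  (fun h => (Finset.mem_erase.mp hq).1 h.symm) u huj w hw
            · have hpW : p ⊆ W := hsub p (Finset.mem_of_mem_erase hp)
              have hunj : u ∉ j := by
                intro huj
                exact absurd huj (Finset.disjoint_right.mp
                  (hdis j hj p (Finset.mem_of_mem_erase hp)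
                    (fun h => (Finset.mem_erase.mp hp).1 h.symm)) hu)
              rcases Finset.mem_insert.mp hw with rfl | hwj
              · rw [hsym]
                exact hjall u (hpW hu) hunj
              · exact hcross p (Finset.mem_of_mem_erase hp) j hj
                  (Finset.mem_erase.mp hp).1 u hu w hwj
            · exact hcross p (Finset.mem_of_mem_erase hp) q (Finset.mem_of_mem_erase hq)
                hpq u hu w hw
        · -- Case 2b
          push_neg at habs
          set d := c x w0 with hd
          have hxS := hx
          have hw0S : w0 ∈ S := (memW w0 hw0W).1
          have hw0x : w0 ≠ x := (memW w0 hw0W).2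
          -- every non-{r,y} edge at x has color d
          have hdiff0 : ∀ w ∈ W, (¬ ∃ p ∈ Pp, w ∈ p ∧ w0 ∈ p) → c x w ≠ r → c x w ≠ y →
              c x w = d := by
            intro w hw hnsp hwr hwy
            by_cases hww0 : w = w0
            · rw [hww0]
            · have hcc : c w0 w = r ∨ c w0 w = y := by
                apply crossD w0 hw0W w hw
                intro p hp hw0p hwp
                exact hnsp ⟨p, hp, hwp, hw0p⟩
              have hxw : x ≠ w := fun h => (memW w hw).2 h.symm
              have hxw0 : x ≠ w0 := fun h => hw0x h.symm
              rcases tri x w0 w hxw0 hxw (fun h => hww0 h.symm) with h | h | h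
              · exact h.symm
              · rcases hcc with h' | h'
                · exact absurd (h.trans h') hw0r
                · exact absurd (h.trans h') hw0y
              · rcases hcc with h' | h'
                · exact absurd (h.trans h') hwr
                · exact absurd (h.trans h') hwy
          have hdelta : ∀ w ∈ W, c x w ≠ r → c x w ≠ y → c x w = d := by
            intro w hw hwr hwy
            by_cases hnsp : ∃ p ∈ Pp, w ∈ p ∧ w0 ∈ p
            · obtain ⟨p, hp, hwp, hw0p⟩ := hnsp
              obtain ⟨w2, hw2W, hw2p, hw2r, hw2y⟩ := habs p hp
              have hw2d : c x w2 = d := by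
                apply hdiff0 w2 hw2W _ hw2r hw2y
                rintro ⟨q, hq, hw2q, hw0q⟩
                exact hw2p (partU w0 q p hq hp hw0q hw0p ▸ hw2q)
              have hww2 : w ≠ w2 := fun h => hw2p (h ▸ hwp)
              have hcc : c w w2 = r ∨ c w w2 = y := by
                apply crossD w hw w2 hw2W
                intro q hq hwq hw2q
                exact hw2p (partU w q p hq hp hwq hwp ▸ hw2q)
              have hxw : x ≠ w := fun h => (memW w hw).2 h.symm
              have hxw2 : x ≠ w2 := fun h => (memW w2 hw2W).2 h.symm
              rcases tri x w w2 hxw hxw2 hww2 with h | h | h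
              · rw [h, hw2d]
              · rcases hcc with h' | h'
                · exact absurd (h.trans h') hwr
                · exact absurd (h.trans h') hwy
              · rcases hcc with h' | h'
                · exact absurd (hw2d.symm.trans (h.trans h')) hw0r
                · exact absurd (hw2d.symm.trans (h.trans h')) hw0y
            · exact hdiff0 w hw hnsp hwr hwy
          set D := W.filter (fun w => c x w = d) with hD
          have hw0D : w0 ∈ D := Finset.mem_filter.mpr ⟨hw0W, rfl⟩
          have hDW : D ⊆ W := Finset.filter_subset _ _
          have hmemD : ∀ w ∈ W, c x w = d → w ∈ D := by
            intro w hw hwd; exact Finset.mem_filter.mpr ⟨hw, hwd⟩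
          have hnotD : ∀ u ∈ W, u ∉ D → c u x ≠ d ∧ (c x u = r ∨ c x u = y) := by
            intro u hu huD
            have h1 : c x u ≠ d := fun h => huD (hmemD u hu h)
            constructor
            · rw [hsym]; exact h1
            · by_contra hcon
              push_neg at hcon
              exact h1 (hdelta u hu hcon.1 hcon.2)
          -- D meets at least two parts
          obtain ⟨w1, hw1D, hw1np⟩ : ∃ w1 ∈ D, ¬ ∃ p ∈ Pp, w1 ∈ p ∧ w0 ∈ p := by
            obtain ⟨p0, hp0, hw0p0⟩ := hcov w0 hw0W
            obtain ⟨w2, hw2W, hw2p0, hw2r, hw2y⟩ := habs p0 hp0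
            refine ⟨w2, hmemD w2 hw2W (hdelta w2 hw2W hw2r hw2y), ?_⟩
            rintro ⟨q, hq, hw2q, hw0q⟩
            exact hw2p0 (partU w0 q p0 hq hp0 hw0q hw0p0 ▸ hw2q)
          by_cases hcst : ∀ u ∈ W, ∀ u' ∈ W, u ∉ D → u' ∉ D → c x u = c x u'
          · -- Case 2b-i : x sees W \ D in a single color g
            by_cases hWD : (W \ D).Nonempty
            · obtain ⟨u0, hu0⟩ := hWD
              have hu0W : u0 ∈ W := (Finset.mem_sdiff.mp hu0).1
              have hu0D : u0 ∉ D := (Finset.mem_sdiff.mp hu0).2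
              set g := c x u0 with hg
              have hgd : g ≠ d := fun h => hu0D (hmemD u0 hu0W h)
              have hAB : insert x D ≠ W \ D := by
                intro h
                have : x ∈ W \ D := h ▸ mem_insert_self x D
                exact hxW (Finset.mem_sdiff.mp this).1
              have hcr : ∀ u ∈ insert x D, ∀ w ∈ W \ D, c u w = d ∨ c u w = g := by
                intro u hu w hw
                have hwW : w ∈ W := (Finset.mem_sdiff.mp hw).1
                have hwD : w ∉ D := (Finset.mem_sdiff.mp hw).2
                have hxwg : c x w = g := hcst w hwW u0 hu0W hwD hu0D
                rcases Finset.mem_insert.mp hu with rfl | huD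
                · exact Or.inr hxwg
                · have huW : u ∈ W := hDW huD
                  have hxud : c x u = d := (Finset.mem_filter.mp huD).2
                  have hxu : x ≠ u := fun h => (memW u huW).2 h.symm
                  have hxw : x ≠ w := fun h => (memW w hwW).2 h.symm
                  have huw : u ≠ w := fun h => hwD (h ▸ huD)
                  rcases tri x u w hxu hxw huw with h | h | h
                  · rw [hxud, hxwg] at h; exact absurd h.symm hgd
                  · exact Or.inl (hxud ▸ h.symm)
                  · exact Or.inr (hxwg ▸ h.symm)
              refine ⟨{insert x D, W \ D}, d, g, ?_, ?_, ?_, ?_, ?_, ?_⟩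
              · intro p hp
                rcases Finset.mem_insert.mp hp with rfl | hp
                · exact insert_nonempty _ _
                · rw [Finset.mem_singleton.mp hp]; exact ⟨u0, hu0⟩
              · intro p hp
                rcases Finset.mem_insert.mp hp with rfl | hp
                · exact Finset.insert_subset hx (hDW.trans hWS)
                · rw [Finset.mem_singleton.mp hp]
                  exact (Finset.sdiff_subset).trans hWS
              · intro p hp q hq hpq
                rcases Finset.mem_insert.mp hp with rfl | hp <;>
                  rcases Finset.mem_insert.mp hq with rfl | hq
                · exact (hpq rfl).elim
                · rw [Finset.mem_singleton.mp hq]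
                  rw [Finset.disjoint_insert_left]
                  exact ⟨fun h => hxW (Finset.mem_sdiff.mp h).1, Finset.disjoint_sdiff⟩
                · rw [Finset.mem_singleton.mp hp]
                  rw [Finset.disjoint_insert_right]
                  exact ⟨fun h => hxW (Finset.mem_sdiff.mp h).1, Finset.disjoint_sdiff.symm⟩
                · rw [Finset.mem_singleton.mp hp, Finset.mem_singleton.mp hq] at hpq
                  exact (hpq rfl).elim
              · intro v hv
                by_cases hvx : v = x
                · exact ⟨insert x D, mem_insert_self _ _, by simp [hvx]⟩
                · have hvW : v ∈ W := Finset.mem_erase.mpr ⟨hvx, hv⟩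
                  by_cases hvD : v ∈ D
                  · exact ⟨insert x D, mem_insert_self _ _, mem_insert_of_mem hvD⟩
                  · exact ⟨W \ D, mem_insert_of_mem (mem_singleton_self _),
                      Finset.mem_sdiff.mpr ⟨hvW, hvD⟩⟩
              · rw [Finset.card_insert_of_notMem (fun h => hAB (Finset.mem_singleton.mp h)),
                  Finset.card_singleton]
              · intro p hp q hq hpq u hu w hw
                rcases Finset.mem_insert.mp hp with rfl | hp <;>
                  rcases Finset.mem_insert.mp hq with rfl | hq
                · exact (hpq rfl).elim
                · exact hcr u hu w ((Finset.mem_singleton.mp hq) ▸ hw)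
                · rw [hsym]
                  exact hcr w hw u ((Finset.mem_singleton.mp hp) ▸ hu)
                · rw [Finset.mem_singleton.mp hp, Finset.mem_singleton.mp hq] at hpq
                  exact (hpq rfl).elim
            · -- W = D : {x} and W
              have hWD' : ∀ w ∈ W, c x w = d := by
                intro w hw
                by_contra hcon
                exact hWD ⟨w, Finset.mem_sdiff.mpr ⟨hw, fun h => hcon (Finset.mem_filter.mp h).2⟩⟩
              have hxWne : ({x} : Finset V) ≠ W := by
                intro h
                exact hxW (h ▸ mem_singleton_self x)
              have hWne : W.Nonempty := ⟨w0, hw0W⟩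
              refine ⟨{{x}, W}, d, d, ?_, ?_, ?_, ?_, ?_, ?_⟩
              · intro p hp
                rcases Finset.mem_insert.mp hp with rfl | hp
                · exact singleton_nonempty x
                · rw [Finset.mem_singleton.mp hp]; exact hWne
              · intro p hp
                rcases Finset.mem_insert.mp hp with rfl | hp
                · exact Finset.singleton_subset_iff.mpr hx
                · rw [Finset.mem_singleton.mp hp]; exact hWS
              · intro p hp q hq hpq
                rcases Finset.mem_insert.mp hp with rfl | hp <;>
                  rcases Finset.mem_insert.mp hq with rfl | hq
                · exact (hpq rfl).elim
                · rw [Finset.mem_singleton.mp hq]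
                  exact Finset.disjoint_singleton_left.mpr hxW
                · rw [Finset.mem_singleton.mp hp]
                  exact Finset.disjoint_singleton_right.mpr hxW
                · rw [Finset.mem_singleton.mp hp, Finset.mem_singleton.mp hq] at hpq
                  exact (hpq rfl).elim
              · intro v hv
                by_cases hvx : v = x
                · exact ⟨{x}, mem_insert_self _ _, by simp [hvx]⟩
                · exact ⟨W, mem_insert_of_mem (mem_singleton_self _),
                    Finset.mem_erase.mpr ⟨hvx, hv⟩⟩
              · rw [Finset.card_insert_of_notMem (fun h => hxWne (Finset.mem_singleton.mp h)),
                  Finset.card_singleton]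
              · intro p hp q hq hpq u hu w hw
                rcases Finset.mem_insert.mp hp with rfl | hp <;>
                  rcases Finset.mem_insert.mp hq with rfl | hq
                · exact (hpq rfl).elim
                · rw [Finset.mem_singleton.mp hu]
                  exact Or.inl (hWD' w ((Finset.mem_singleton.mp hq) ▸ hw))
                · rw [Finset.mem_singleton.mp hw, hsym]
                  exact Or.inl (hWD' u ((Finset.mem_singleton.mp hp) ▸ hu))
                · rw [Finset.mem_singleton.mp hp, Finset.mem_singleton.mp hq] at hpq
                  exact (hpq rfl).elim
          · -- Case 2b-ii
            push_neg at hcst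
            obtain ⟨ur, hurW, ub, hubW, hurD, hubD, hcc⟩ := hcst
            set Rel : V → V → Prop := fun a b => a ∈ S ∧ b ∈ S ∧ c a b = d with hRel
            -- module property of the reachable set
            have claimM : ∀ v, Relation.ReflTransGen Rel x v →
                ∀ u ∈ S, ¬ Relation.ReflTransGen Rel x u → c v u = c x u := by
              intro v hv
              induction hv with
              | refl => intro u _ _; rfl
              | @tail t v' hxt htv IH =>
                intro u huS hunreach
                have hreachv' : Relation.ReflTransGen Rel x v' := hxt.tail htv
                have hvu : v' ≠ u := fun h => hunreach (h ▸ hreachv')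
                have hcxud : c x u ≠ d := fun h =>
                  hunreach (Relation.ReflTransGen.single ⟨hx, huS, h⟩)
                have hcvud : c v' u ≠ d := fun h =>
                  hunreach (hreachv'.tail ⟨htv.2.1, huS, h⟩)
                by_cases htv' : t = v'
                · exact htv' ▸ IH u huS hunreach
                · have htu : t ≠ u := fun h => hunreach (h ▸ hxt)
                  rcases tri t v' u htv' htu hvu with h | h | h
                  · exact absurd ((htv.2.2.symm.trans h).trans (IH u huS hunreach)).symm hcxud
                  · exact absurd (htv.2.2.symm.trans h).symm hcvud
                  · exact h.symm.trans (IH u huS hunreach)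
            -- witness extraction along reachability
            have claimWit : ∀ u, Relation.ReflTransGen Rel x u → u ≠ x → c x u ≠ d →
                ∃ v z p, p ∈ Pp ∧ v ∈ p ∧ z ∈ p ∧ v ∈ D ∧ z ∈ W ∧ z ∉ D ∧
                  c v z = d ∧ c x z = c x u := by
              intro u hu
              induction hu with
              | refl => intro h _; exact absurd rfl h
              | @tail t u' hxt htu IH =>
                intro hu'x hcxu'd
                have ht_S : t ∈ S := htu.1
                have hu'S : u' ∈ S := htu.2.1
                have hctu : c t u' = d := htu.2.2
                by_cases htx : t = x
                · exact absurd (htx ▸ hctu) hcxu'd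
                · have htW : t ∈ W := Finset.mem_erase.mpr ⟨htx, ht_S⟩
                  have hu'W : u' ∈ W := Finset.mem_erase.mpr ⟨hu'x, hu'S⟩
                  by_cases hcxtd : c x t = d
                  · have htD : t ∈ D := hmemD t htW hcxtd
                    have hu'D : u' ∉ D := fun h => hcxu'd (Finset.mem_filter.mp h).2
                    by_cases hsp : ∃ p ∈ Pp, t ∈ p ∧ u' ∈ p
                    · obtain ⟨p, hp, htp, hu'p⟩ := hsp
                      exact ⟨t, u', p, hp, htp, hu'p, htD, hu'W, hu'D, hctu, rfl⟩
                    · have hcry : c t u' = r ∨ c t u' = y := by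
                        apply crossD t htW u' hu'W
                        intro p hp htp hu'p
                        exact hsp ⟨p, hp, htp, hu'p⟩
                      rcases hcry with h | h
                      · exact absurd (hctu.symm.trans h) hw0r
                      · exact absurd (hctu.symm.trans h) hw0y
                  · obtain ⟨v, z, p, hp, hvp, hzp, hvD, hzW, hzD, hvz, hcz⟩ := IH htx hcxtd
                    refine ⟨v, z, p, hp, hvp, hzp, hvD, hzW, hzD, hvz, ?_⟩
                    by_cases htu' : t = u'
                    · exact hcz.trans (by rw [htu'])
                    · have hxt' : x ≠ t := fun h => htx h.symm
                      have hxu' : x ≠ u' := fun h => hu'x h.symm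
                      rcases tri x t u' hxt' hxu' htu' with h | h | h
                      · exact hcz.trans h
                      · exact absurd (h.trans hctu) hcxtd
                      · exact absurd (h.trans hctu) hcxu'd
            -- there is an unreachable vertex
            have hEproper : ∃ uo ∈ S, ¬ Relation.ReflTransGen Rel x uo := by
              by_contra hcon
              push_neg at hcon
              have hurS : ur ∈ S := (memW ur hurW).1
              have hubS : ub ∈ S := (memW ub hubW).1
              have hcxurd : c x ur ≠ d := fun hh => hurD (hmemD ur hurW hh)
              have hcxubd : c x ub ≠ d := fun hh => hubD (hmemD ub hubW hh)
              obtain ⟨v, z, p, hp, hvp, hzp, hvD, hzW, hzD, hvz, hcz⟩ :=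
                claimWit ur (hcon ur hurS) (memW ur hurW).2 hcxurd
              obtain ⟨v', z', p', hp', hvp', hzp', hvD', hzW', hzD', hvz', hcz'⟩ :=
                claimWit ub (hcon ub hubS) (memW ub hubW).2 hcxubd
              -- abbreviations and basic facts
              have hne0 : c x z ≠ c x z' := by
                rw [hcz, hcz']; exact hcc
              have hczd : c x z ≠ d := fun hh => hzD (hmemD z hzW hh)
              have hcz'd : c x z' ≠ d := fun hh => hzD' (hmemD z' hzW' hh)
              have hr0 : c x z = r ∨ c x z = y := (hnotD z hzW hzD).2
              have hb0 : c x z' = r ∨ c x z' = y := (hnotD z' hzW' hzD').2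
              have hdr0 : d ≠ c x z := by
                rcases hr0 with h | h <;> rw [h] <;> [exact hw0r; exact hw0y]
              have hdb0 : d ≠ c x z' := by
                rcases hb0 with h | h <;> rw [h] <;> [exact hw0r; exact hw0y]
              have hvW : v ∈ W := hDW hvD
              have hv'W : v' ∈ W := hDW hvD'
              have hcxv : c x v = d := (Finset.mem_filter.mp hvD).2
              have hcxv' : c x v' = d := (Finset.mem_filter.mp hvD').2
              have hxz : x ≠ z := fun h => (memW z hzW).2 h.symm
              have hxz' : x ≠ z' := fun h => (memW z' hzW').2 h.symm
              have hxv : x ≠ v := fun h => (memW v hvW).2 h.symm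
              have hxv' : x ≠ v' := fun h => (memW v' hv'W).2 h.symm
              have hzz' : z ≠ z' := fun h => hne0 (by rw [h])
              have hzv : z ≠ v := fun h => hczd (by rw [h]; exact hcxv)
              have hzv'ne : z ≠ v' := fun h => hczd (by rw [h]; exact hcxv')
              have hz'v : z' ≠ v := fun h => hcz'd (by rw [h]; exact hcxv)
              have hz'v'ne : z' ≠ v' := fun h => hcz'd (by rw [h]; exact hcxv')
              have hzvd : c z v = d := (hsym z v).trans hvz
              have hz'v'd : c z' v' = d := (hsym z' v').trans hvz'
              by_cases hpp' : p = p'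
              · -- same part
                subst hpp'
                obtain ⟨w'', hw''D, hw''p⟩ : ∃ w'' ∈ D, w'' ∉ p := by
                  by_cases hw0p : w0 ∈ p
                  · exact ⟨w1, hw1D, fun hw1p => hw1np ⟨p, hp, hw1p, hw0p⟩⟩
                  · exact ⟨w0, hw0D, hw0p⟩
                have hw''W : w'' ∈ W := hDW hw''D
                have hcxw'' : c x w'' = d := (Finset.mem_filter.mp hw''D).2
                obtain ⟨ps, hps, hw''ps⟩ := hcov w'' hw''W
                have hpsp : ps ≠ p := fun h => hw''p (h ▸ hw''ps)
                have crossPPS : ∀ a ∈ p, c a w'' = r ∨ c a w'' = y := fun a ha =>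
                  hcross p hp ps hps (fun h => hpsp h.symm) a ha w'' hw''ps
                have hxw'' : x ≠ w'' := fun h => (memW w'' hw''W).2 h.symm
                have hzw''ne : z ≠ w'' := fun h => hw''p (h ▸ hzp)
                have hz'w''ne : z' ≠ w'' := fun h => hw''p (h ▸ hzp')
                have hvw''ne : v ≠ w'' := fun h => hw''p (h ▸ hvp)
                have hv'w''ne : v' ≠ w'' := fun h => hw''p (h ▸ hvp')
                have hnotd_cross : ∀ a ∈ p, c a w'' ≠ d := by
                  intro a ha hda
                  rcases crossPPS a ha with h | h
                  · exact hw0r (hda.symm.trans h)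
                  · exact hw0y (hda.symm.trans h)
                have hzw'' : c z w'' = c x z := by
                  rcases tri x z w'' hxz hxw'' hzw''ne with h | h | h
                  · exact absurd (h.trans hcxw'') hczd
                  · exact h.symm
                  · exact absurd (h.symm.trans hcxw'') (hnotd_cross z hzp)
                have hz'w'' : c z' w'' = c x z' := by
                  rcases tri x z' w'' hxz' hxw'' hz'w''ne with h | h | h
                  · exact absurd (h.trans hcxw'') hcz'd
                  · exact h.symm
                  · exact absurd (h.symm.trans hcxw'') (hnotd_cross z' hzp')
                have hvw'' : c v w'' = c x z := by
                  rcases tri z v w'' hzv hzw''ne hvw''ne with h | h | h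
                  · exact absurd ((hzvd.symm.trans h).trans hzw'') hdr0
                  · exact absurd (hzvd.symm.trans h).symm (hnotd_cross v hvp)
                  · exact h.symm.trans hzw''
                have hv'w'' : c v' w'' = c x z' := by
                  rcases tri z' v' w'' hz'v'ne hz'w''ne hv'w''ne with h | h | h
                  · exact absurd ((hz'v'd.symm.trans h).trans hz'w'') hdb0
                  · exact absurd (hz'v'd.symm.trans h).symm (hnotd_cross v' hvp')
                  · exact h.symm.trans hz'w''
                have hzz'col : c z z' = c x z ∨ c z z' = c x z' := by
                  rcases tri x z z' hxz hxz' hzz' with h | h | h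
                  · exact absurd h hne0
                  · exact Or.inl h.symm
                  · exact Or.inr h.symm
                have hz'vcol : c z' v = c x z' ∨ c z' v = d := by
                  rcases tri x z' v hxz' hxv hz'v with h | h | h
                  · exact absurd (h.trans hcxv) hcz'd
                  · exact Or.inl h.symm
                  · exact Or.inr (h.symm.trans hcxv)
                rcases hz'vcol with hB1 | hB2
                · have hzz'b : c z z' = c x z' := by
                    rcases tri z z' v hzz' hzv hz'v with h | h | h
                    · rcases hzz'col with hh | hh
                      · exact absurd (hh.symm.trans (h.trans hzvd)) hczd
                      · exact absurd (hh.symm.trans (h.trans hzvd)) hcz'd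
                    · exact h.trans hB1
                    · exact absurd (hzvd.symm.trans (h.trans hB1)) hdb0
                  have hzv'col : c z v' = c x z ∨ c z v' = d := by
                    rcases tri x z v' hxz hxv' hzv'ne with h | h | h
                    · exact absurd (h.trans hcxv') hczd
                    · exact Or.inl h.symm
                    · exact Or.inr (h.symm.trans hcxv')
                  rcases hzv'col with hC1 | hC2
                  · rcases tri z z' v' hzz' hzv'ne hz'v'ne with h | h | h
                    · exact absurd ((hzz'b.symm.trans h).trans hC1).symm hne0
                    · exact absurd ((hzz'b.symm.trans h).trans hz'v'd) (fun hh => hdb0 hh.symm)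
                    · exact absurd ((hC1.symm.trans h).trans hz'v'd) hczd
                  · rcases tri z v' w'' hzv'ne hzw''ne hv'w''ne with h | h | h
                    · exact absurd ((hC2.symm.trans h).trans hzw'') hdr0
                    · exact absurd ((hC2.symm.trans h).trans hv'w'') hdb0
                    · exact absurd ((hzw''.symm.trans h).trans hv'w'') hne0
                · rcases tri z' v w'' hz'v hz'w''ne hvw''ne with h | h | h
                  · exact absurd ((hB2.symm.trans h).trans hz'w'') hdb0
                  · exact absurd ((hB2.symm.trans h).trans hvw'') hdr0
                  · exact absurd ((hz'w''.symm.trans h).trans hvw'').symm hne0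
              · -- different parts
                have crossPP' : ∀ a ∈ p, ∀ b ∈ p', c a b = r ∨ c a b = y := fun a ha b hb =>
                  hcross p hp p' hp' hpp' a ha b hb
                have hnotd_cross : ∀ a ∈ p, ∀ b ∈ p', c a b ≠ d := by
                  intro a ha b hb hda
                  rcases crossPP' a ha b hb with h | h
                  · exact hw0r (hda.symm.trans h)
                  · exact hw0y (hda.symm.trans h)
                have hvz'b : c v z' = c x z' := by
                  rcases tri x v z' hxv hxz' (fun h => hz'v (h.symm)) with h | h | h
                  · exact absurd (hcxv.symm.trans h) hdb0
                  · exact absurd (hcxv.symm.trans h).symm (hnotd_cross v hvp z' hzp')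
                  · exact h.symm
                have hv'z : c v' z = c x z := by
                  rcases tri x v' z hxv' hxz (fun h => hzv'ne (h.symm)) with h | h | h
                  · exact absurd (hcxv'.symm.trans h) hdr0
                  · exact absurd (hcxv'.symm.trans h).symm
                      (fun hh => hnotd_cross z hzp v' hvp' ((hsym z v').trans hh))
                  · exact h.symm
                have hzz'b : c z z' = c x z' := by
                  rcases tri z v z' hzv hzz' (fun h => hz'v h.symm) with h | h | h
                  · exact absurd (h.symm.trans hzvd) (hnotd_cross z hzp z' hzp')
                  · exact absurd (hzvd.symm.trans (h.trans hvz'b)) hdb0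
                  · exact h.trans hvz'b
                rcases tri z' v' z hz'v'ne (fun h => hzz' h.symm) (fun h => hzv'ne h.symm)
                    with h | h | h
                · exact absurd (hz'v'd.symm.trans (h.trans ((hsym z' z).trans hzz'b))) hdb0
                · exact absurd (hz'v'd.symm.trans (h.trans hv'z)) hdr0
                · exact absurd (((((hsym z' z).trans hzz'b).symm.trans h).trans hv'z)).symm hne0
            -- construct the final partition from the reachable set E
            obtain ⟨uo, huoS, huoNR⟩ := hEproper
            set E := S.filter (fun v => Relation.ReflTransGen Rel x v) with hEdef
            have hxE : x ∈ E := Finset.mem_filter.mpr ⟨hx, Relation.ReflTransGen.refl⟩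
            have hES : E ⊆ S := Finset.filter_subset _ _
            have hnotE : ∀ u ∈ S, u ∉ E → ¬ Relation.ReflTransGen Rel x u :=
              fun u hu huE hr => huE (Finset.mem_filter.mpr ⟨hu, hr⟩)
            have hmodule : ∀ e ∈ E, ∀ u ∈ S, u ∉ E → c e u = c x u := fun e he u hu huE =>
              claimM e (Finset.mem_filter.mp he).2 u hu (hnotE u hu huE)
            have hcxRY : ∀ u ∈ S, u ∉ E → c x u = r ∨ c x u = y := by
              intro u hu huE
              have hux : u ≠ x := fun h => huE (by rw [h]; exact hxE)
              have huW : u ∈ W := Finset.mem_erase.mpr ⟨hux, hu⟩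
              have huD : u ∉ D := fun hD' => (hnotE u hu huE)
                (Relation.ReflTransGen.single ⟨hx, hu, (Finset.mem_filter.mp hD').2⟩)
              exact (hnotD u huW huD).2
            have huoE : uo ∉ E := fun h => huoNR (Finset.mem_filter.mp h).2
            have huox : uo ≠ x := fun h => huoNR (by rw [h])
            have huoW : uo ∈ W := Finset.mem_erase.mpr ⟨huox, huoS⟩
            obtain ⟨quo, hquo, huoquo⟩ := hcov uo huoW
            have hcrE : ∀ u ∈ E, ∀ t0 ∈ Pp, ∀ w ∈ t0 \ E, c u w = r ∨ c u w = y := by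
              intro u hu t0 ht0 w hw
              have hwS : w ∈ S := hWS (hsub t0 ht0 (Finset.mem_sdiff.mp hw).1)
              have hwE : w ∉ E := (Finset.mem_sdiff.mp hw).2
              rw [hmodule u hu w hwS hwE]
              exact hcxRY w hwS hwE
            refine ⟨insert E ((Pp.image (fun t => t \ E)).filter (fun t => t.Nonempty)),
              r, y, ?_, ?_, ?_, ?_, ?_, ?_⟩
            · intro p hp
              rcases Finset.mem_insert.mp hp with rfl | hp
              · exact ⟨x, hxE⟩
              · exact (Finset.mem_filter.mp hp).2
            · intro p hp
              rcases Finset.mem_insert.mp hp with rfl | hp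
              · exact hES
              · obtain ⟨t0, ht0, rfl⟩ := Finset.mem_image.mp (Finset.mem_filter.mp hp).1
                exact (Finset.sdiff_subset).trans ((hsub t0 ht0).trans hWS)
            · intro p hp q hq hpq
              rcases Finset.mem_insert.mp hp with rfl | hp <;>
                rcases Finset.mem_insert.mp hq with rfl | hq
              · exact (hpq rfl).elim
              · obtain ⟨t0, ht0, rfl⟩ := Finset.mem_image.mp (Finset.mem_filter.mp hq).1
                exact Finset.disjoint_sdiff
              · obtain ⟨t0, ht0, rfl⟩ := Finset.mem_image.mp (Finset.mem_filter.mp hp).1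
                exact Finset.sdiff_disjoint
              · obtain ⟨t0, ht0, rfl⟩ := Finset.mem_image.mp (Finset.mem_filter.mp hp).1
                obtain ⟨t1, ht1, rfl⟩ := Finset.mem_image.mp (Finset.mem_filter.mp hq).1
                have ht01 : t0 ≠ t1 := fun h => hpq (by rw [h])
                exact Finset.disjoint_of_subset_left Finset.sdiff_subset
                  (Finset.disjoint_of_subset_right Finset.sdiff_subset (hdis t0 ht0 t1 ht1 ht01))
            · intro v hv
              by_cases hvE : v ∈ E
              · exact ⟨E, mem_insert_self _ _, hvE⟩
              · have hvx : v ≠ x := fun h => hvE (by rw [h]; exact hxE)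
                have hvW : v ∈ W := Finset.mem_erase.mpr ⟨hvx, hv⟩
                obtain ⟨t0, ht0, hvt0⟩ := hcov v hvW
                refine ⟨t0 \ E, mem_insert_of_mem (Finset.mem_filter.mpr
                  ⟨Finset.mem_image_of_mem _ ht0, ⟨v, Finset.mem_sdiff.mpr ⟨hvt0, hvE⟩⟩⟩),
                  Finset.mem_sdiff.mpr ⟨hvt0, hvE⟩⟩
            · refine Finset.one_lt_card.mpr ⟨E, mem_insert_self _ _, quo \ E, ?_, ?_⟩
              · exact mem_insert_of_mem (Finset.mem_filter.mpr
                  ⟨Finset.mem_image_of_mem _ hquo, ⟨uo, Finset.mem_sdiff.mpr ⟨huoquo, huoE⟩⟩⟩)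
              · intro h
                exact huoE (by rw [h]; exact Finset.mem_sdiff.mpr ⟨huoquo, huoE⟩)
            · intro p hp q hq hpq u hu w hw
              rcases Finset.mem_insert.mp hp with rfl | hp <;>
                rcases Finset.mem_insert.mp hq with rfl | hq
              · exact (hpq rfl).elim
              · obtain ⟨t0, ht0, rfl⟩ := Finset.mem_image.mp (Finset.mem_filter.mp hq).1
                exact hcrE u hu t0 ht0 w hw
              · obtain ⟨t0, ht0, rfl⟩ := Finset.mem_image.mp (Finset.mem_filter.mp hp).1
                rw [hsym]
                exact hcrE w hw t0 ht0 u hu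
              · obtain ⟨t0, ht0, rfl⟩ := Finset.mem_image.mp (Finset.mem_filter.mp hp).1
                obtain ⟨t1, ht1, rfl⟩ := Finset.mem_image.mp (Finset.mem_filter.mp hq).1
                have ht01 : t0 ≠ t1 := fun h => hpq (by rw [h])
                exact hcross t0 ht0 t1 ht1 ht01 u (Finset.mem_sdiff.mp hu).1
                  w (Finset.mem_sdiff.mp hw).1

lemma lemA {k M : ℕ} (hM : 1 ≤ M) (c : Fin (4*M) → Fin (4*M) → Fin k)
    (hsym : ∀ a b, c a b = c b a)
    (tri : ∀ a b d : Fin (4*M), a ≠ b → a ≠ d → b ≠ d →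
      c a b = c a d ∨ c a b = c b d ∨ c a d = c b d) :
    ∃ (v : Fin (4*M)) (i : Fin k) (A : Finset (Fin (4*M))),
      v ∉ A ∧ M ≤ A.card ∧ ∀ a ∈ A, c v a = i := by
  classical
  have hcardU : (univ : Finset (Fin (4*M))).card = 4*M := by simp
  obtain ⟨Pp, r, y, hne, hsub, hdis, hcov, hPc, hcross⟩ :=
    lemB c hsym tri (4*M) univ hcardU (by omega)
  have hPpne : Pp.Nonempty := Finset.card_pos.mp (by omega)
  obtain ⟨V1, hV1, hV1max⟩ := Finset.exists_max_image Pp (fun p => p.card) hPpne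
  obtain ⟨v, pv, hpv, hvpv, hpvcard⟩ :
      ∃ (v : Fin (4*M)) (pv : Finset (Fin (4*M))), pv ∈ Pp ∧ v ∈ pv ∧ pv.card ≤ 2*M := by
    by_cases hbig : V1.card ≤ 2*M
    · obtain ⟨v, hv⟩ := hne V1 hV1
      exact ⟨v, V1, hV1, hv, hbig⟩
    · obtain ⟨q, hq, hqV1⟩ := Finset.exists_mem_ne (s := Pp) (by omega) V1
      obtain ⟨v, hv⟩ := hne q hq
      refine ⟨v, q, hq, hv, ?_⟩
      have hdisj := hdis q hq V1 hV1 hqV1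
      have hcle : q.card + V1.card ≤ 4*M := by
        rw [← Finset.card_union_of_disjoint hdisj]
        calc (q ∪ V1).card ≤ (univ : Finset (Fin (4*M))).card := Finset.card_le_univ _
        _ = 4*M := hcardU
      omega
  set C := (univ : Finset (Fin (4*M))) \ pv with hC
  have hCcard : 2*M ≤ C.card := by
    rw [hC, Finset.card_sdiff_of_subset (Finset.subset_univ pv), hcardU]; omega
  have hCrb : ∀ u ∈ C, c v u = r ∨ c v u = y := by
    intro u hu
    have hupv : u ∉ pv := (Finset.mem_sdiff.mp hu).2
    obtain ⟨q, hq, huq⟩ := hcov u (Finset.mem_univ u)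
    have hqpv : pv ≠ q := fun h => hupv (h ▸ huq)
    exact hcross pv hpv q hq hqpv v hvpv u huq
  set Ar := C.filter (fun u => c v u = r) with hAr
  set Ay := C.filter (fun u => c v u = y) with hAy
  have hcover : C ⊆ Ar ∪ Ay := by
    intro u hu
    rcases hCrb u hu with h | h
    · exact Finset.mem_union_left _ (Finset.mem_filter.mpr ⟨hu, h⟩)
    · exact Finset.mem_union_right _ (Finset.mem_filter.mpr ⟨hu, h⟩)
  have hsum : C.card ≤ Ar.card + Ay.card :=
    le_trans (Finset.card_le_card hcover) (Finset.card_union_le _ _)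
  have hvC : v ∉ C := fun h => (Finset.mem_sdiff.mp h).2 hvpv
  by_cases hArM : M ≤ Ar.card
  · exact ⟨v, r, Ar, fun h => hvC (Finset.filter_subset _ _ h), hArM,
      fun a ha => (Finset.mem_filter.mp ha).2⟩
  · exact ⟨v, y, Ay, fun h => hvC (Finset.filter_subset _ _ h), by omega,
      fun a ha => (Finset.mem_filter.mp ha).2⟩

end

def MSet (k q : ℕ) (R : Finset (Fin k) → ℕ) : Set ℕ :=
  {n : ℕ | 0 < n ∧ ∀ c : Fin n → Fin n → Fin k, IsGallai c →
    ∃ I : Finset (Fin k), I.Nonempty ∧ I.card ≤ q ∧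
      ∃ S : Finset (Fin n), S.card = R I ∧ ∀ a ∈ S, ∀ b ∈ S, a ≠ b → c a b ∈ I}

lemma multiGallaiNum_eq (k q : ℕ) (R : Finset (Fin k) → ℕ) :
    multiGallaiNum k q R = sInf (MSet k q R) := rfl

lemma MSet_up {k q : ℕ} {R : Finset (Fin k) → ℕ} {n m : ℕ}
    (hn : n ∈ MSet k q R) (hnm : n ≤ m) : m ∈ MSet k q R := by
  obtain ⟨hn0, hn⟩ := hn
  refine ⟨by omega, fun c hc => ?_⟩
  have hinj : Function.Injective (Fin.castLE hnm) := Fin.castLE_injective hnm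
  have hc' : IsGallai (fun a b => c (Fin.castLE hnm a) (Fin.castLE hnm b)) := by
    obtain ⟨hsym, hg⟩ := hc
    refine ⟨fun a b => hsym _ _, fun a b d hab had hbd => ?_⟩
    exact hg _ _ _ (fun h => hab (hinj h)) (fun h => had (hinj h)) (fun h => hbd (hinj h))
  obtain ⟨I, hIne, hIc, S, hScard, hScol⟩ := hn _ hc'
  refine ⟨I, hIne, hIc, S.image (Fin.castLE hnm), ?_, ?_⟩
  · rw [Finset.card_image_of_injective _ hinj, hScard]
  · intro a ha b hb hab
    obtain ⟨a0, ha0, rfl⟩ := Finset.mem_image.mp ha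
    obtain ⟨b0, hb0, rfl⟩ := Finset.mem_image.mp hb
    exact hScol a0 ha0 b0 hb0 (fun h => hab (congrArg _ h))

lemma MSet_shrink {k q : ℕ} {R R' : Finset (Fin k) → ℕ} {n : ℕ}
    (hle : ∀ I, R' I ≤ R I) (hn : n ∈ MSet k q R) : n ∈ MSet k q R' := by
  obtain ⟨hn0, hn⟩ := hn
  refine ⟨hn0, fun c hc => ?_⟩
  obtain ⟨I, hIne, hIc, S, hScard, hScol⟩ := hn c hc
  obtain ⟨S', hS'sub, hS'card⟩ := Finset.exists_subset_card_eq (s := S) (n := R' I)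
    (by rw [hScard]; exact hle I)
  exact ⟨I, hIne, hIc, S', hS'card,
    fun a ha b hb hab => hScol a (hS'sub ha) b (hS'sub hb) hab⟩

theorem multiGallaiNum_le_four_mul (k q : ℕ) (hq : 1 ≤ q) (hqk : q ≤ k)
    (P : Finset (Fin k) → ℕ)
    (hP : ∀ I : Finset (Fin k), I.Nonempty → I.card ≤ q → 0 < P I) :
    multiGallaiNum k q P ≤ 4 * (Finset.univ.sup fun i : Fin k =>
      multiGallaiNum k q fun I => if i ∈ I then P I - 1 else P I) := by
  classical
  have hk0 : 0 < k := by omega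
  have hshr : ∀ i : Fin k, ∀ I : Finset (Fin k),
      (if i ∈ I then P I - 1 else P I) ≤ P I := by
    intro i I
    split <;> omega
  by_cases hex : ∀ i : Fin k,
      (MSet k q (fun I => if i ∈ I then P I - 1 else P I)).Nonempty
  · set M := Finset.univ.sup fun i : Fin k =>
      multiGallaiNum k q fun I => if i ∈ I then P I - 1 else P I with hMdef
    have hmem : ∀ i : Fin k, multiGallaiNum k q (fun I => if i ∈ I then P I - 1 else P I)
        ∈ MSet k q (fun I => if i ∈ I then P I - 1 else P I) := by
      intro i
      rw [multiGallaiNum_eq]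
      exact Nat.sInf_mem (hex i)
    have hMle : ∀ i : Fin k,
        multiGallaiNum k q (fun I => if i ∈ I then P I - 1 else P I) ≤ M := by
      intro i
      rw [hMdef]
      exact Finset.le_sup (f := fun i : Fin k =>
        multiGallaiNum k q fun I => if i ∈ I then P I - 1 else P I) (Finset.mem_univ i)
    have hM1 : 1 ≤ M := le_trans (hmem ⟨0, hk0⟩).1 (hMle ⟨0, hk0⟩)
    have hkey : 4*M ∈ MSet k q P := by
      refine ⟨by omega, fun c hc => ?_⟩
      have hsym := hc.1
      have tri : ∀ a b d : Fin (4*M), a ≠ b → a ≠ d → b ≠ d →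
          c a b = c a d ∨ c a b = c b d ∨ c a d = c b d := by
        intro a b d h1 h2 h3
        by_contra hcon
        push_neg at hcon
        exact hc.2 a b d h1 h2 h3 ⟨hcon.1, hcon.2.1, hcon.2.2⟩
      obtain ⟨v, i, A, hvA, hAcard, hAcol⟩ := lemA hM1 c hsym tri
      obtain ⟨B, hBA, hBcard⟩ := Finset.exists_subset_card_eq (s := A)
        (n := multiGallaiNum k q (fun I => if i ∈ I then P I - 1 else P I))
        (le_trans (hMle i) hAcard)
      set Ni := multiGallaiNum k q (fun I => if i ∈ I then P I - 1 else P I) with hNi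
      have e := B.orderIsoOfFin hBcard
      set f : Fin Ni → Fin (4*M) := fun j => (e j : Fin (4*M)) with hf
      have hfinj : Function.Injective f := fun a b h => e.injective (Subtype.ext h)
      have hfB : ∀ j, f j ∈ B := fun j => (e j).2
      have hcg : IsGallai (fun a b => c (f a) (f b)) := by
        refine ⟨fun a b => hsym _ _, fun a b d hab had hbd => ?_⟩
        exact hc.2 _ _ _ (fun h => hab (hfinj h)) (fun h => had (hfinj h))
          (fun h => hbd (hfinj h))
      obtain ⟨I, hIne, hIc, S0, hS0card, hS0col⟩ := (hmem i).2 _ hcg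
      set S1 := S0.image f with hS1
      have hS1A : ∀ a ∈ S1, a ∈ A := by
        intro a ha
        obtain ⟨a0, ha0, rfl⟩ := Finset.mem_image.mp ha
        exact hBA (hfB a0)
      have hS1card : S1.card = (if i ∈ I then P I - 1 else P I) := by
        rw [hS1, Finset.card_image_of_injective _ hfinj, hS0card]
      have hS1col : ∀ a ∈ S1, ∀ b ∈ S1, a ≠ b → c a b ∈ I := by
        intro a ha b hb hab
        obtain ⟨a0, ha0, rfl⟩ := Finset.mem_image.mp ha
        obtain ⟨b0, hb0, rfl⟩ := Finset.mem_image.mp hb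
        exact hS0col a0 ha0 b0 hb0 (fun h => hab (congrArg f h))
      by_cases hiI : i ∈ I
      · refine ⟨I, hIne, hIc, insert v S1, ?_, ?_⟩
        · rw [Finset.card_insert_of_notMem (fun h => hvA (hS1A v h)), hS1card]
          have hPpos := hP I hIne hIc
          rw [if_pos hiI]
          omega
        · intro a ha b hb hab
          rcases Finset.mem_insert.mp ha with rfl | haS <;>
            rcases Finset.mem_insert.mp hb with rfl | hbS
          · exact (hab rfl).elim
          · rw [hAcol b (hS1A b hbS)]; exact hiI
          · rw [hsym, hAcol a (hS1A a haS)]; exact hiI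
          · exact hS1col a haS b hbS hab
      · refine ⟨I, hIne, hIc, S1, ?_, hS1col⟩
        rw [hS1card, if_neg hiI]
    rw [multiGallaiNum_eq]
    exact Nat.sInf_le hkey
  · push_neg at hex
    obtain ⟨i, hi⟩ := hex
    have hTP : MSet k q P = ∅ := by
      rw [Set.eq_empty_iff_forall_notMem]
      intro n hn
      have hmm := MSet_shrink (hshr i) hn
      rw [hi] at hmm
      exact hmm
    rw [multiGallaiNum_eq, hTP, Nat.sInf_empty]
    exact Nat.zero_le _
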